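/- Let P and Q be real symmetric positive definite n×n matrices, and let λ₁, …, λₙ be the eigenvalues (with multiplicity) of the symmetric positive definite matrix (√P)⁻¹ Q (√P)⁻¹. Then the symmetric Stein divergence satisfies log det((P+Q)/2) − (1/2) log det(P Q) = Σᵢ log((λᵢ^{1/2} + λᵢ^{−1/2})/2). In particular, the Stein divergence is a function of the vector-valued distance d_vv(P,Q) alone. -/

import Mathlib

open Matrix

section OldSqrt

open scoped ComplexOrder

/-- The square root of a positive semidefinite matrix, as `Matrix.PosSemidef.sqrt` was defined
in the older Mathlib (it has since been removed in favour of `CFC.sqrt`). -/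
noncomputable def Matrix.PosSemidef.sqrt {n : Type*} [Fintype n] [DecidableEq n] {𝕜 : Type*}
    [RCLike 𝕜] {A : Matrix n n 𝕜} (hA : A.PosSemidef) : Matrix n n 𝕜 :=
  (hA.1.eigenvectorUnitary : Matrix n n 𝕜) *
    diagonal ((RCLike.ofReal : ℝ → 𝕜) ∘ (√·) ∘ hA.1.eigenvalues) *
    (star hA.1.eigenvectorUnitary : Matrix n n 𝕜)

lemma Matrix.PosSemidef.posSemidef_sqrt {n : Type*} [Fintype n] [DecidableEq n] {𝕜 : Type*}
    [RCLike 𝕜] {A : Matrix n n 𝕜} (hA : A.PosSemidef) : PosSemidef hA.sqrt := by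
  unfold Matrix.PosSemidef.sqrt
  have hd : (diagonal ((RCLike.ofReal : ℝ → 𝕜) ∘ (√·) ∘ hA.1.eigenvalues)).PosSemidef := by
    rw [posSemidef_diagonal_iff]
    intro i
    simp only [Function.comp_apply, RCLike.ofReal_nonneg]
    exact Real.sqrt_nonneg _
  have h := hd.mul_mul_conjTranspose_same (hA.1.eigenvectorUnitary : Matrix n n 𝕜)
  simpa [star_eq_conjTranspose] using h

end OldSqrt

/-- The matrix `(√P)⁻¹ Q (√P)⁻¹` is Hermitian (i.e. real symmetric). -/
lemma sqrtConj_isHermitian {n : ℕ} {P Q : Matrix (Fin n) (Fin n) ℝ}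
    (hP : P.PosDef) (hQ : Q.PosDef) :
    ((hP.posSemidef.sqrt)⁻¹ * Q * (hP.posSemidef.sqrt)⁻¹).IsHermitian := by
  have hs : ((hP.posSemidef.sqrt)⁻¹).IsHermitian :=
    hP.posSemidef.posSemidef_sqrt.isHermitian.inv
  have hq : Q.IsHermitian := hQ.isHermitian
  simp only [Matrix.IsHermitian, conjTranspose_mul, hs.eq, hq.eq, Matrix.mul_assoc]

lemma sqrt_mul_self_aux {n : ℕ} {P : Matrix (Fin n) (Fin n) ℝ} (hP : P.PosSemidef) :
    hP.sqrt * hP.sqrt = P := by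
  have hUU : (star hP.1.eigenvectorUnitary : Matrix (Fin n) (Fin n) ℝ) *
      (hP.1.eigenvectorUnitary : Matrix (Fin n) (Fin n) ℝ) = 1 :=
    Unitary.coe_star_mul_self _
  have hspec := hP.1.spectral_theorem
  rw [Unitary.conjStarAlgAut_apply] at hspec
  unfold Matrix.PosSemidef.sqrt
  conv_rhs => rw [hspec]
  rw [show ∀ a b c d e f : Matrix (Fin n) (Fin n) ℝ, a * b * c * (d * e * f)
      = a * (b * (c * d) * e) * f by intros; simp only [Matrix.mul_assoc], hUU, Matrix.mul_one,
    diagonal_mul_diagonal]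
  congr 2
  congr 1
  funext i
  simp [Real.mul_self_sqrt (hP.eigenvalues_nonneg i)]

lemma posDef_conj_aux {n : ℕ} {Q B : Matrix (Fin n) (Fin n) ℝ}
    (hQ : Q.PosDef) (hB : IsUnit B) : (Bᴴ * Q * B).PosDef := by
  refine PosDef.of_dotProduct_mulVec_pos (isHermitian_conjTranspose_mul_mul B hQ.isHermitian) fun x hx => ?_
  have hBx : B *ᵥ x ≠ 0 := by
    have hinj := Matrix.mulVec_injective_iff_isUnit.mpr hB
    exact (hinj.ne_iff' (by simp)).2 hx
  simpa only [star_mulVec, dotProduct_mulVec, vecMul_vecMul] using hQ.dotProduct_mulVec_pos hBx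

/-- The symmetric Stein divergence `S(P,Q) = log det ((P+Q)/2) − (1/2) log det (PQ)` is a
function of the vector-valued distance alone: it equals
`Σᵢ log ((λᵢ^{1/2} + λᵢ^{−1/2}) / 2)`, where `λ₁, …, λₙ` are the eigenvalues of
`(√P)⁻¹ Q (√P)⁻¹`. -/
theorem stein_divergence_eq_fun_of_vvd {n : ℕ}
    (P Q : Matrix (Fin n) (Fin n) ℝ) (hP : P.PosDef) (hQ : Q.PosDef) :
    Real.log (((1 / 2 : ℝ) • (P + Q)).det) - (1 / 2) * Real.log ((P * Q).det)
      = ∑ i, Real.log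
          ((Real.sqrt ((sqrtConj_isHermitian hP hQ).eigenvalues i)
            + (Real.sqrt ((sqrtConj_isHermitian hP hQ).eigenvalues i))⁻¹) / 2) := by
  set S := hP.posSemidef.sqrt with hSdef
  set A := S⁻¹ * Q * S⁻¹ with hAdef
  have hherm : A.IsHermitian := sqrtConj_isHermitian hP hQ
  set lam := (sqrtConj_isHermitian hP hQ).eigenvalues with hlam
  have hSS : S * S = P := sqrt_mul_self_aux hP.posSemidef
  have hdetP : 0 < P.det := hP.det_pos
  have hdetS : S.det ≠ 0 := by
    intro h
    rw [← hSS, det_mul, h, mul_zero] at hdetP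
    exact lt_irrefl 0 hdetP
  have hSunit : IsUnit S := (Matrix.isUnit_iff_isUnit_det S).2 hdetS.isUnit
  have hSinvH : (S⁻¹)ᴴ = S⁻¹ := hP.posSemidef.posSemidef_sqrt.isHermitian.inv.eq
  have hApd : A.PosDef := by
    have h := posDef_conj_aux hQ (Matrix.isUnit_nonsing_inv_iff.2 hSunit)
    rwa [hSinvH] at h
  have hlampos : ∀ i, 0 < lam i := fun i => hApd.eigenvalues_pos i
  -- Q = S * A * S
  have hQA : Q = S * A * S := by
    have : S * A * S = (S * S⁻¹) * Q * (S⁻¹ * S) := by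
      rw [hAdef]; noncomm_ring
    rw [this, Matrix.mul_nonsing_inv S hdetS.isUnit,
      Matrix.nonsing_inv_mul S hdetS.isUnit, Matrix.one_mul, Matrix.mul_one]
  -- P + Q = S * (1 + A) * S
  have hPQ : P + Q = S * (1 + A) * S := by
    have : S * (1 + A) * S = S * S + S * A * S := by noncomm_ring
    rw [this, hSS, ← hQA]
  -- determinant of conjugation by S
  have hdconj : ∀ M : Matrix (Fin n) (Fin n) ℝ, (S * M * S).det = P.det * M.det := by
    intro M
    rw [det_mul, det_mul, ← hSS, det_mul]; ring
  have hsc : ∀ (B C M : Matrix (Fin n) (Fin n) ℝ),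
      (1/2:ℝ) • (B * M * C) = B * ((1/2:ℝ) • M) * C := by
    intro B C M; rw [mul_smul_comm, smul_mul_assoc]
  -- spectral theorem for A
  have hspec := hherm.spectral_theorem
  rw [Unitary.conjStarAlgAut_apply] at hspec
  set U := (hherm.eigenvectorUnitary : Matrix (Fin n) (Fin n) ℝ) with hU
  have hUU : U * star U = 1 := (Matrix.mem_unitaryGroup_iff).mp hherm.eigenvectorUnitary.2
  have hdiagconj : ∀ M : Matrix (Fin n) (Fin n) ℝ, (U * M * star U).det = M.det := by
    intro M
    rw [det_mul_right_comm, hUU, one_mul]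
  -- det ((1/2) • (1 + A)) = ∏ (1 + lam i)/2
  have hAdiag : (1 : Matrix (Fin n) (Fin n) ℝ) + A
      = U * (1 + diagonal (RCLike.ofReal ∘ hherm.eigenvalues)) * star U := by
    have : U * (1 + diagonal (RCLike.ofReal ∘ hherm.eigenvalues)) * star U
        = U * star U + U * diagonal (RCLike.ofReal ∘ hherm.eigenvalues) * star U := by
      noncomm_ring
    rw [this, hUU, ← hspec]
  have hlameq : hherm.eigenvalues = lam := rfl
  have hdet1 : ((1 / 2 : ℝ) • ((1 : Matrix (Fin n) (Fin n) ℝ) + A)).det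
      = ∏ i, ((1 + lam i) / 2) := by
    rw [hAdiag, one_div, ← one_div, hsc, hdiagconj]
    have : (1 / 2 : ℝ) • ((1 : Matrix (Fin n) (Fin n) ℝ)
        + diagonal (RCLike.ofReal ∘ hherm.eigenvalues))
        = diagonal (fun i => (1 + lam i) / 2) := by
      rw [hlameq]
      ext i j
      rcases eq_or_ne i j with h | h
      · subst h; simp [Matrix.one_apply, RCLike.ofReal]; ring
      · simp [Matrix.one_apply, h, diagonal_apply_ne _ h]
    rw [this, det_diagonal]
  have hdetA : A.det = ∏ i, lam i := by
    have := hherm.det_eq_prod_eigenvalues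
    simpa [hlameq] using this
  -- the two determinants
  have hd1 : (((1 / 2 : ℝ) • (P + Q)).det) = P.det * ∏ i, ((1 + lam i) / 2) := by
    rw [hPQ, hsc, hdconj, hdet1]
  have hd2 : ((P * Q).det) = P.det * (P.det * ∏ i, lam i) := by
    rw [det_mul, hQA, hdconj, hdetA]
  rw [hd1, hd2]
  -- now pure real-number computation
  have h2 : (0:ℝ) < 2 := by norm_num
  have hterm1 : ∀ i, (0:ℝ) < (1 + lam i) / 2 := fun i => by
    have := hlampos i; positivity
  have hlogprod1 : Real.log (∏ i, ((1 + lam i) / 2)) = ∑ i, Real.log ((1 + lam i) / 2) :=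
    Real.log_prod (fun i _ => (hterm1 i).ne')
  have hlogprod2 : Real.log (∏ i, lam i) = ∑ i, Real.log (lam i) :=
    Real.log_prod (fun i _ => (hlampos i).ne')
  have hprodpos1 : (0:ℝ) < ∏ i, ((1 + lam i) / 2) := Finset.prod_pos fun i _ => hterm1 i
  have hprodpos2 : (0:ℝ) < ∏ i, lam i := Finset.prod_pos fun i _ => hlampos i
  rw [Real.log_mul hdetP.ne' hprodpos1.ne',
    Real.log_mul hdetP.ne' (mul_pos hdetP hprodpos2).ne',
    Real.log_mul hdetP.ne' hprodpos2.ne', hlogprod1, hlogprod2]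
  rw [mul_add, mul_add, Finset.mul_sum]
  rw [show Real.log P.det + ∑ i, Real.log ((1 + lam i) / 2)
      - (1 / 2 * Real.log P.det + (1 / 2 * Real.log P.det + ∑ i, 1 / 2 * Real.log (lam i)))
      = ∑ i, (Real.log ((1 + lam i) / 2) - 1 / 2 * Real.log (lam i)) by
    rw [Finset.sum_sub_distrib]; ring]
  refine Finset.sum_congr rfl fun i _ => ?_
  have hl := hlampos i
  have hsq : Real.sqrt (lam i) > 0 := Real.sqrt_pos.2 hl
  have key : (Real.sqrt (lam i) + (Real.sqrt (lam i))⁻¹) / 2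
      = ((1 + lam i) / 2) / Real.sqrt (lam i) := by
    field_simp
    rw [Real.sq_sqrt hl.le]
    ring
  rw [key, Real.log_div (hterm1 i).ne' hsq.ne', Real.log_sqrt hl.le]
  ring
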